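/- Define the stalactic congruence on the free monoid [n]* by: u ≡ v iff u and v have the same content (same number of occurrences of each letter) and for all i ≠ j in [n], u factors as u'·i·u'' with j ∈ supp(u'') and i ∉ supp(u'') if and only if v factors analogously. The map sending each letter i to the corresponding diagonal matrix (recording content) together with the maps s_{ij} (sending i ↦ I = [[1,1],[0,0]], j ↦ J = [[1,0],[0,0]], other letters ↦ identity) gives an injective monoid homomorphism from the stalactic monoid of rank n into a direct product of n copies of (ℕ₀, +) and n(n-1)/2 copies of the flip-flop monoid F = {E, I, J}. -/

import Mathlib

namespace Stmt7

def Imat : Matrix (Fin 2) (Fin 2) ℕ := !![1, 1; 0, 0]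
def Jmat : Matrix (Fin 2) (Fin 2) ℕ := !![1, 0; 0, 0]

lemma mul_Imat {X : Matrix (Fin 2) (Fin 2) ℕ} (h : X = 1 ∨ X = Imat ∨ X = Jmat) :
    X * Imat = Imat := by
  rcases h with h | h | h <;> subst h <;> simp [Imat, Jmat] <;> decide

lemma mul_Jmat {X : Matrix (Fin 2) (Fin 2) ℕ} (h : X = 1 ∨ X = Imat ∨ X = Jmat) :
    X * Jmat = Jmat := by
  rcases h with h | h | h <;> subst h <;> simp [Imat, Jmat] <;> decide

lemma Imat_ne_one : Imat ≠ 1 := by decide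
lemma Jmat_ne_one : Jmat ≠ 1 := by decide
lemma Imat_ne_Jmat : Imat ≠ Jmat := by decide

lemma mem_of_getLast?_eq_some {α : Type*} {l : List α} {a : α}
    (h : l.getLast? = some a) : a ∈ l := by
  have hne : l ≠ [] := by intro hn; rw [hn] at h; simp at h
  rw [List.getLast?_eq_getLast hne, Option.some_inj] at h
  rw [← h]; exact List.getLast_mem hne

variable {n : ℕ}

/-- the last letter among {i,j} occurring in w, if any -/
def lastIJ (i j : Fin n) (w : List (Fin n)) : Option (Fin n) :=
  (w.filter (fun a => a = i || a = j)).getLast?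

def F (i : Fin n) : Option (Fin n) → Matrix (Fin 2) (Fin 2) ℕ
  | none => 1
  | some a => if a = i then Imat else Jmat

lemma F_mem (i : Fin n) (o : Option (Fin n)) :
    F i o = 1 ∨ F i o = Imat ∨ F i o = Jmat := by
  cases o with
  | none => exact Or.inl rfl
  | some a =>
      by_cases h : a = i
      · exact Or.inr (Or.inl (by simp [F, h]))
      · exact Or.inr (Or.inr (by simp [F, h]))

lemma lastIJ_nil (i j : Fin n) : lastIJ i j [] = none := rfl

lemma lastIJ_concat (i j a : Fin n) (w : List (Fin n)) :
    lastIJ i j (w ++ [a]) =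
      if a = i ∨ a = j then some a else lastIJ i j w := by
  unfold lastIJ
  rw [List.filter_append]
  by_cases h : a = i ∨ a = j
  · rw [if_pos h]
    have : List.filter (fun a => a = i || a = j) [a] = [a] := by
      simp [List.filter_singleton]
      rcases h with h | h <;> simp [h]
    rw [this, List.getLast?_concat]
  · rw [if_neg h]
    push_neg at h
    have : List.filter (fun a => a = i || a = j) [a] = [] := by
      simp [List.filter_singleton, h.1, h.2]
    rw [this, List.append_nil]

lemma prod_enc (i j : Fin n) (w : List (Fin n)) :
    (w.map (fun a => if a = i then Imat else if a = j then Jmat else 1)).prod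
      = F i (lastIJ i j w) := by
  induction w using List.reverseRecOn with
  | nil => simp [lastIJ_nil, F]
  | append_singleton w a ih =>
      rw [List.map_append, List.prod_append, ih, List.map_singleton,
        List.prod_singleton, lastIJ_concat]
      by_cases hai : a = i
      · rw [if_pos hai, if_pos (Or.inl hai)]
        rw [mul_Imat (F_mem i _)]
        simp [F, hai]
      · rw [if_neg hai]
        by_cases haj : a = j
        · rw [if_pos haj, if_pos (Or.inr haj)]
          by_cases hji : a = i
          · exact absurd hji hai
          · rw [mul_Jmat (F_mem i _)]
            simp [F, hai]
        · rw [if_neg haj, if_neg (by tauto), mul_one]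

lemma lastIJ_mem {i j a : Fin n} {w : List (Fin n)} (h : lastIJ i j w = some a) :
    a ∈ w ∧ (a = i ∨ a = j) := by
  unfold lastIJ at h
  have hmem : a ∈ w.filter (fun a => a = i || a = j) := by
    have hne : w.filter (fun a => a = i || a = j) ≠ [] := by
      intro hnil; rw [hnil] at h; simp at h
    rw [List.getLast?_eq_getLast hne] at h
    rw [← Option.some_inj.mp h]
    exact List.getLast_mem hne
  rw [List.mem_filter] at hmem
  refine ⟨hmem.1, ?_⟩
  have := hmem.2
  simpa using this

lemma lastIJ_valid (i j : Fin n) (w : List (Fin n)) :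
    lastIJ i j w = none ∨ lastIJ i j w = some i ∨ lastIJ i j w = some j := by
  cases h : lastIJ i j w with
  | none => exact Or.inl rfl
  | some a =>
      rcases (lastIJ_mem h).2 with h' | h' <;> subst h' <;> tauto

lemma lastIJ_comm (i j : Fin n) (w : List (Fin n)) :
    lastIJ i j w = lastIJ j i w := by
  unfold lastIJ
  congr 1
  apply List.filter_congr
  intro a _
  simp [Bool.or_comm]

lemma lastIJ_eq_none_iff (i j : Fin n) (w : List (Fin n)) :
    lastIJ i j w = none ↔ i ∉ w ∧ j ∉ w := by
  unfold lastIJ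
  rw [List.getLast?_eq_none_iff, List.filter_eq_nil_iff]
  constructor
  · intro h
    constructor
    · intro hi; have := h i hi; simp at this
    · intro hj; have := h j hj; simp at this
  · rintro ⟨hi, hj⟩ a ha
    simp only [Bool.or_eq_true, decide_eq_true_eq, not_or]
    exact ⟨fun h => hi (h ▸ ha), fun h => hj (h ▸ ha)⟩

/-- the stalactic factorization property -/
def P (i j : Fin n) (u : List (Fin n)) : Prop :=
  ∃ u' u'' : List (Fin n), u = u' ++ i :: u'' ∧ j ∈ u'' ∧ i ∉ u''

lemma lastSplit {i : Fin n} {u : List (Fin n)} (h : i ∈ u) :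
    ∃ u' u'' : List (Fin n), u = u' ++ i :: u'' ∧ i ∉ u'' := by
  induction u using List.reverseRecOn with
  | nil => simp at h
  | append_singleton w a ih =>
      by_cases hai : a = i
      · exact ⟨w, [], by simp [hai], by simp⟩
      · have hiw : i ∈ w := by
          rcases List.mem_append.mp h with h' | h'
          · exact h'
          · simp at h'; exact absurd h'.symm hai
        obtain ⟨u', u'', heq, hni⟩ := ih hiw
        refine ⟨u', u'' ++ [a], by simp [heq], ?_⟩
        simp only [List.mem_append, List.mem_singleton, not_or]
        exact ⟨hni, fun h' => hai h'.symm⟩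

lemma P_iff_last {i j : Fin n} (hij : i ≠ j) (u : List (Fin n)) :
    P i j u ↔ i ∈ u ∧ lastIJ i j u = some j := by
  constructor
  · rintro ⟨u', u'', rfl, hju, hiu⟩
    refine ⟨by simp, ?_⟩
    unfold lastIJ
    rw [List.filter_append]
    have hfc : List.filter (fun a => a = i || a = j) (i :: u'')
        = i :: List.filter (fun a => a = i || a = j) u'' := by
      simp [List.filter_cons]
    rw [hfc, List.getLast?_append]
    have hjl : j ∈ List.filter (fun a => a = i || a = j) u'' := by
      rw [List.mem_filter]; exact ⟨hju, by simp⟩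
    cases hLo : (List.filter (fun a => a = i || a = j) u'').getLast? with
    | none =>
        rw [List.getLast?_eq_none_iff] at hLo
        rw [hLo] at hjl
        exact absurd hjl List.not_mem_nil
    | some b =>
        have hbl : b ∈ List.filter (fun a => a = i || a = j) u'' :=
          mem_of_getLast?_eq_some hLo
        rw [List.mem_filter] at hbl
        have hb2 : b = i ∨ b = j := by have := hbl.2; simpa using this
        have hbj : b = j := by
          rcases hb2 with h | h
          · exact absurd (h ▸ hbl.1) hiu
          · exact h
        rw [List.getLast?_cons, hLo, hbj]
        simp
  · rintro ⟨hiu, hlast⟩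
    obtain ⟨u', u'', rfl, hni⟩ := lastSplit hiu
    refine ⟨u', u'', rfl, ?_, hni⟩
    by_contra hjn
    have hfnil : List.filter (fun a => a = i || a = j) u'' = [] := by
      rw [List.filter_eq_nil_iff]
      intro a ha
      simp only [Bool.or_eq_true, decide_eq_true_eq, not_or]
      exact ⟨fun h => hni (h ▸ ha), fun h => hjn (h ▸ ha)⟩
    unfold lastIJ at hlast
    rw [List.filter_append] at hlast
    have hfc : List.filter (fun a => a = i || a = j) (i :: u'')
        = [i] := by
      simp [List.filter_cons, hfnil]
    rw [hfc, List.getLast?_append] at hlast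
    simp at hlast
    exact hij hlast

lemma last_some_j {i j : Fin n} (hij : i ≠ j) (u : List (Fin n)) :
    lastIJ i j u = some j ↔ j ∈ u ∧ (i ∈ u → P i j u) := by
  constructor
  · intro h
    have hm := lastIJ_mem h
    exact ⟨hm.1, fun hi => (P_iff_last hij u).mpr ⟨hi, h⟩⟩
  · rintro ⟨hju, hP⟩
    by_cases hiu : i ∈ u
    · exact ((P_iff_last hij u).mp (hP hiu)).2
    · rcases lastIJ_valid i j u with h | h | h
      · rw [lastIJ_eq_none_iff] at h; exact absurd hju h.2
      · exact absurd (lastIJ_mem h).1 hiu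
      · exact h

lemma lastIJ_eq_of {i j : Fin n} (hij : i ≠ j) {u v : List (Fin n)}
    (hmem : ∀ x : Fin n, x ∈ u ↔ x ∈ v)
    (hP : P i j u ↔ P i j v) (hP' : P j i u ↔ P j i v) :
    lastIJ i j u = lastIJ i j v := by
  rcases lastIJ_valid i j u with h | h | h
  · rw [h, eq_comm, lastIJ_eq_none_iff]
    rw [lastIJ_eq_none_iff] at h
    rw [← hmem i, ← hmem j]; exact h
  · rw [lastIJ_comm i j u] at h
    rw [lastIJ_comm i j u, lastIJ_comm i j v, h, eq_comm,
      last_some_j hij.symm v]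
    rw [last_some_j hij.symm u] at h
    exact ⟨(hmem i).mp h.1, fun hj => hP'.mp (h.2 ((hmem j).mpr hj))⟩
  · rw [h, eq_comm, last_some_j hij v]
    rw [last_some_j hij u] at h
    exact ⟨(hmem j).mp h.1, fun hi => hP.mp (h.2 ((hmem i).mpr hi))⟩

lemma F_inj {i j : Fin n} (hij : i ≠ j) {o₁ o₂ : Option (Fin n)}
    (h₁ : o₁ = none ∨ o₁ = some i ∨ o₁ = some j)
    (h₂ : o₂ = none ∨ o₂ = some i ∨ o₂ = some j)
    (h : F i o₁ = F i o₂) : o₁ = o₂ := by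
  have hFn : F i (none : Option (Fin n)) = 1 := rfl
  have hFi : F i (some i) = Imat := by simp [F]
  have hFj : F i (some j) = Jmat := by simp [F, hij.symm]
  rcases h₁ with h₁ | h₁ | h₁ <;> rcases h₂ with h₂ | h₂ | h₂ <;>
    subst h₁ <;> subst h₂ <;> rw [hFn] at * <;> try rfl
  all_goals first
    | rfl
    | (rw [hFi] at h; exact absurd h.symm Imat_ne_one)
    | (rw [hFj] at h; exact absurd h.symm Jmat_ne_one)
    | (rw [hFi, hFj] at h; exact absurd h Imat_ne_Jmat)
    | (rw [hFj, hFi] at h; exact absurd h.symm Imat_ne_Jmat)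
    | (rw [hFi] at h; exact absurd h Imat_ne_one)
    | (rw [hFj] at h; exact absurd h Jmat_ne_one)

lemma c_apply (w : List (Fin n)) (x : Fin n) :
    ((w.map (fun a => fun i => Multiplicative.ofAdd (if i = a then 1 else 0))).prod) x
      = Multiplicative.ofAdd (w.count x) := by
  induction w with
  | nil => simp
  | cons a w ih =>
      rw [List.map_cons, List.prod_cons, Pi.mul_apply, ih, List.count_cons]
      by_cases h : x = a
      · subst h; simp [← ofAdd_add, Nat.add_comm]
      · have h' : ¬ a = x := fun h' => h h'.symm
        simp [h, h', ← ofAdd_add]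

end Stmt7

theorem stmt_7 (n : ℕ)
    (I J : Matrix (Fin 2) (Fin 2) ℕ)
    (hI : I = !![1, 1; 0, 0])
    (hJ : J = !![1, 0; 0, 0])
    (c : List (Fin n) → (Fin n → Multiplicative ℕ))
    (hc : ∀ w, c w =
      (w.map (fun a => fun i => Multiplicative.ofAdd (if i = a then 1 else 0))).prod)
    (s : Fin n → Fin n → List (Fin n) → Matrix (Fin 2) (Fin 2) ℕ)
    (hs : ∀ i j w, s i j w =
      (w.map (fun a => if a = i then I else if a = j then J else 1)).prod)
    (Φ : List (Fin n) →
      ((Fin n → Multiplicative ℕ) ×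
        ({p : Fin n × Fin n // p.1 < p.2} → Matrix (Fin 2) (Fin 2) ℕ)))
    (hΦ : ∀ w, Φ w = (c w, fun p => s p.1.1 p.1.2 w)) :
    (Φ [] = 1) ∧
    (∀ u v : List (Fin n), Φ (u ++ v) = Φ u * Φ v) ∧
    (∀ u v : List (Fin n), Φ u = Φ v ↔
      ((∀ x : Fin n, u.count x = v.count x) ∧
       ∀ i j : Fin n, i ≠ j →
        ((∃ u' u'' : List (Fin n), u = u' ++ i :: u'' ∧ j ∈ u'' ∧ i ∉ u'') ↔
         (∃ v' v'' : List (Fin n), v = v' ++ i :: v'' ∧ j ∈ v'' ∧ i ∉ v'')))) := by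
  have hIm : I = Stmt7.Imat := hI
  have hJm : J = Stmt7.Jmat := hJ
  subst hIm hJm
  have hs' : ∀ i j w, s i j w = Stmt7.F i (Stmt7.lastIJ i j w) := by
    intro i j w; rw [hs, Stmt7.prod_enc]
  constructor
  · rw [hΦ]
    refine Prod.ext ?_ ?_
    · simp [hc]
    · funext p; simp [hs', Stmt7.lastIJ_nil, Stmt7.F]
  constructor
  · intro u v
    rw [hΦ, hΦ, hΦ]
    refine Prod.ext ?_ ?_
    · simp only [hc, List.map_append, List.prod_append]; rfl
    · funext p
      simp only [Prod.snd_mul, Pi.mul_apply, hs, List.map_append, List.prod_append]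
  · intro u v
    constructor
    · intro h
      rw [hΦ, hΦ] at h
      have h1 : c u = c v := congrArg Prod.fst h
      have h2 : ∀ p : {p : Fin n × Fin n // p.1 < p.2},
          s p.1.1 p.1.2 u = s p.1.1 p.1.2 v := by
        intro p
        exact congrFun (congrArg Prod.snd h) p
      have hcount : ∀ x : Fin n, u.count x = v.count x := by
        intro x
        have := congrFun h1 x
        rw [hc, hc, Stmt7.c_apply, Stmt7.c_apply] at this
        exact Multiplicative.ofAdd.injective this
      have hmem : ∀ x : Fin n, x ∈ u ↔ x ∈ v := by
        intro x
        rw [← List.count_pos_iff, ← List.count_pos_iff, hcount x]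
      have hlast : ∀ i j : Fin n, i ≠ j →
          Stmt7.lastIJ i j u = Stmt7.lastIJ i j v := by
        intro i j hij
        rcases lt_or_gt_of_ne hij with hlt | hlt
        · have this : s i j u = s i j v := h2 ⟨(i, j), hlt⟩
          rw [hs', hs'] at this
          exact Stmt7.F_inj hij (Stmt7.lastIJ_valid i j u)
            (Stmt7.lastIJ_valid i j v) this
        · have this : s j i u = s j i v := h2 ⟨(j, i), hlt⟩
          rw [hs', hs'] at this
          rw [Stmt7.lastIJ_comm]
          rw [Stmt7.lastIJ_comm i j v]
          exact Stmt7.F_inj hij.symm (Stmt7.lastIJ_valid j i u)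
            (Stmt7.lastIJ_valid j i v) this
      refine ⟨hcount, ?_⟩
      intro i j hij
      show Stmt7.P i j u ↔ Stmt7.P i j v
      rw [Stmt7.P_iff_last hij, Stmt7.P_iff_last hij, hlast i j hij, hmem i]
    · rintro ⟨hcount, hP⟩
      have hmem : ∀ x : Fin n, x ∈ u ↔ x ∈ v := by
        intro x
        rw [← List.count_pos_iff, ← List.count_pos_iff, hcount x]
      rw [hΦ, hΦ]
      refine Prod.ext ?_ ?_
      · show c u = c v
        funext x
        rw [hc, hc, Stmt7.c_apply, Stmt7.c_apply, hcount x]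
      · funext p
        obtain ⟨⟨i, j⟩, hlt⟩ := p
        have hij : i ≠ j := ne_of_lt hlt
        show s i j u = s i j v
        rw [hs', hs',
          Stmt7.lastIJ_eq_of hij hmem (hP i j hij) (hP j i hij.symm)]
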